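/- Let S, T ∈ ℝ^{m×m} be symmetric positive definite with D = T - S positive semidefinite, and let μ, ν ∈ ℝ^m. Define KL = (1/2)[tr(T⁻¹S) - m + (ν-μ)ᵀT⁻¹(ν-μ) + log(det T / det S)]. Then KL ≤ (1/2)(‖S⁻¹‖₂‖ν-μ‖₂² + ‖S⁻¹‖₂ tr(D)). -/

import Mathlib

open Matrix

noncomputable def op2 {m n : ℕ} (A : Matrix (Fin m) (Fin n) ℝ) : ℝ :=
  ‖LinearMap.toContinuousLinearMap (Matrix.toEuclideanLin A)‖

noncomputable def enorm2 {n : ℕ} (v : Fin n → ℝ) : ℝ :=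
  Real.sqrt (∑ i, v i ^ 2)

/-- The (r+1)-st singular value, via the Eckart–Young characterization:
the distance (in operator 2-norm) to the set of matrices of rank at most r. -/
noncomputable def sval {n m : ℕ} (A : Matrix (Fin n) (Fin m) ℝ) (r : ℕ) : ℝ :=
  sInf {t | ∃ B : Matrix (Fin n) (Fin m) ℝ, B.rank ≤ r ∧ t = op2 (A - B)}

open scoped MatrixOrder in
noncomputable def Matrix.PosSemidef.sqrt {m : ℕ} {M : Matrix (Fin m) (Fin m) ℝ}
    (_h : M.PosSemidef) : Matrix (Fin m) (Fin m) ℝ := CFC.sqrt M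

open scoped MatrixOrder in
lemma Matrix.PosSemidef.sqrt_mul_self {m : ℕ} {M : Matrix (Fin m) (Fin m) ℝ}
    (h : M.PosSemidef) : h.sqrt * h.sqrt = M := CFC.sqrt_mul_sqrt_self M h.nonneg

open scoped MatrixOrder in
lemma Matrix.PosSemidef.posSemidef_sqrt {m : ℕ} {M : Matrix (Fin m) (Fin m) ℝ}
    (h : M.PosSemidef) : h.sqrt.PosSemidef := (CFC.sqrt_nonneg M).posSemidef

section Helpers

variable {m : ℕ}

private lemma dot_nonneg_of_psd {M : Matrix (Fin m) (Fin m) ℝ} (h : M.PosSemidef)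
    (x : Fin m → ℝ) : 0 ≤ x ⬝ᵥ (M *ᵥ x) := by
  simpa using h.dotProduct_mulVec_nonneg x

private lemma symm_of_herm {M : Matrix (Fin m) (Fin m) ℝ} (h : M.IsHermitian) : Mᵀ = M := by
  exact Matrix.isHermitian_iff_isSymm.mp h

private lemma dot_mulVec_symm {P : Matrix (Fin m) (Fin m) ℝ} (hP : Pᵀ = P)
    (x y : Fin m → ℝ) : x ⬝ᵥ (P *ᵥ y) = (P *ᵥ x) ⬝ᵥ y := by
  rw [Matrix.dotProduct_mulVec, ← Matrix.mulVec_transpose, hP]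

private lemma quad_conj {P M : Matrix (Fin m) (Fin m) ℝ} (hP : Pᵀ = P) (x : Fin m → ℝ) :
    x ⬝ᵥ ((P * M * P) *ᵥ x) = (P *ᵥ x) ⬝ᵥ (M *ᵥ (P *ᵥ x)) := by
  rw [← Matrix.mulVec_mulVec, ← Matrix.mulVec_mulVec, dot_mulVec_symm hP]

private lemma enorm2_sq (v : Fin m → ℝ) : enorm2 v ^ 2 = v ⬝ᵥ v := by
  rw [enorm2, Real.sq_sqrt (by positivity)]
  simp [dotProduct, pow_two]

private lemma quad_le_op2 (M : Matrix (Fin m) (Fin m) ℝ) (x : Fin m → ℝ) :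
    x ⬝ᵥ (M *ᵥ x) ≤ op2 M * enorm2 x ^ 2 := by
  set f := LinearMap.toContinuousLinearMap (Matrix.toEuclideanLin M) with hf
  set x' : EuclideanSpace ℝ (Fin m) := (WithLp.equiv 2 _).symm x with hx'
  have h1 : x ⬝ᵥ (M *ᵥ x) = inner ℝ x' (f x') := by
    simp [hf, hx', Matrix.toEuclideanLin_apply, PiLp.inner_apply, dotProduct,
      WithLp.equiv_symm_apply, PiLp.toLp_apply, mul_comm]
  have h2 : ‖x'‖ = enorm2 x := by
    rw [EuclideanSpace.norm_eq, enorm2]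
    simp [hx', WithLp.equiv_symm_apply, PiLp.toLp_apply, Real.norm_eq_abs, sq_abs]
  calc x ⬝ᵥ (M *ᵥ x) = inner ℝ x' (f x') := h1
    _ ≤ ‖x'‖ * ‖f x'‖ := real_inner_le_norm _ _
    _ ≤ ‖x'‖ * (‖f‖ * ‖x'‖) := mul_le_mul_of_nonneg_left (f.le_opNorm x') (norm_nonneg _)
    _ = op2 M * enorm2 x ^ 2 := by rw [h2, op2]; ring

private lemma trace_conj {P M : Matrix (Fin m) (Fin m) ℝ} (hP : Pᵀ = P) :
    (P * M * P).trace = ∑ i, (P i) ⬝ᵥ (M *ᵥ (P i)) := by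
  have hPe : ∀ i j : Fin m, P j i = P i j := fun i j => by
    conv_lhs => rw [← hP]
    rfl
  simp only [Matrix.trace, Matrix.diag, Matrix.mul_apply, Matrix.mulVec, dotProduct,
    Finset.sum_mul, Finset.mul_sum]
  refine Finset.sum_congr rfl fun i _ => ?_
  rw [Finset.sum_comm]
  refine Finset.sum_congr rfl fun j _ => Finset.sum_congr rfl fun k _ => ?_
  rw [hPe i k]; ring

private lemma inv_quad_anti {S T : Matrix (Fin m) (Fin m) ℝ} (hS : S.PosDef) (hT : T.PosDef)
    (hD : (T - S).PosSemidef) (x : Fin m → ℝ) :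
    x ⬝ᵥ (T⁻¹ *ᵥ x) ≤ x ⬝ᵥ (S⁻¹ *ᵥ x) := by
  set A := hS.posSemidef.sqrt with hA
  have hAA : A * A = S := hS.posSemidef.sqrt_mul_self
  have hAsymm : Aᵀ = A := symm_of_herm hS.posSemidef.posSemidef_sqrt.1
  have hdetA : IsUnit A.det := by
    have h1 : A.det * A.det = S.det := by rw [← Matrix.det_mul, hAA]
    have := hS.det_pos
    refine isUnit_iff_ne_zero.2 fun h => ?_
    rw [h, mul_zero] at h1; linarith
  have hdetT : IsUnit T.det := isUnit_iff_ne_zero.2 (ne_of_gt hT.det_pos)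
  have hAinv_symm : (A⁻¹)ᵀ = A⁻¹ := by rw [Matrix.transpose_nonsing_inv, hAsymm]
  have hSinv : S⁻¹ = A⁻¹ * A⁻¹ := by rw [← hAA, Matrix.mul_inv_rev]
  set C := A * T⁻¹ * A with hC
  have hCsymm : Cᵀ = C := by
    rw [hC, Matrix.transpose_mul, Matrix.transpose_mul, hAsymm,
      Matrix.transpose_nonsing_inv, symm_of_herm hT.1]
    rw [Matrix.mul_assoc]
  have hCherm : C.IsHermitian := by
    rwa [Matrix.IsHermitian, Matrix.conjTranspose_eq_transpose_of_trivial]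
  have hCpsd : C.PosSemidef := by
    refine Matrix.PosSemidef.of_dotProduct_mulVec_nonneg hCherm fun z => ?_
    simp only [star_trivial, hC, quad_conj hAsymm]
    exact dot_nonneg_of_psd hT.inv.posSemidef _
  have hdetC : IsUnit C.det := by
    have : C.det = A.det * T⁻¹.det * A.det := by rw [hC, Matrix.det_mul, Matrix.det_mul]
    rw [this]
    exact (hdetA.mul (isUnit_iff_ne_zero.2 (ne_of_gt hT.inv.det_pos))).mul hdetA
  set B := hCpsd.sqrt with hB
  have hBB : B * B = C := hCpsd.sqrt_mul_self
  have hBsymm : Bᵀ = B := symm_of_herm hCpsd.posSemidef_sqrt.1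
  have hdetB : IsUnit B.det := by
    have h1 : B.det * B.det = C.det := by rw [← Matrix.det_mul, hBB]
    exact isUnit_of_mul_isUnit_left (h1 ▸ hdetC)
  have hTinvinv : T⁻¹⁻¹ = T := Matrix.nonsing_inv_nonsing_inv T hdetT
  have hCinv : C⁻¹ = A⁻¹ * T * A⁻¹ := by
    rw [hC, Matrix.mul_inv_rev, Matrix.mul_inv_rev, hTinvinv, Matrix.mul_assoc]
  have step1 : ∀ z : Fin m → ℝ, z ⬝ᵥ z ≤ z ⬝ᵥ (C⁻¹ *ᵥ z) := by
    intro z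
    set y := A⁻¹ *ᵥ z with hy
    have hz : A *ᵥ y = z := by
      rw [hy, Matrix.mulVec_mulVec, Matrix.mul_nonsing_inv _ hdetA, Matrix.one_mulVec]
    have e1 : z ⬝ᵥ (C⁻¹ *ᵥ z) = y ⬝ᵥ (T *ᵥ y) := by rw [hCinv, quad_conj hAinv_symm]
    have e2 : z ⬝ᵥ z = y ⬝ᵥ (S *ᵥ y) := by
      rw [← hAA, ← Matrix.mulVec_mulVec, dot_mulVec_symm hAsymm, hz]
    have h3 := dot_nonneg_of_psd hD y
    rw [Matrix.sub_mulVec, dotProduct_sub] at h3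
    rw [e1, e2]; linarith
  have step2 : ∀ z : Fin m → ℝ, z ⬝ᵥ (C *ᵥ z) ≤ z ⬝ᵥ z := by
    intro z
    have h := step1 (B *ᵥ z)
    have e1 : (B *ᵥ z) ⬝ᵥ (B *ᵥ z) = z ⬝ᵥ (C *ᵥ z) := by
      rw [← dot_mulVec_symm hBsymm, Matrix.mulVec_mulVec, hBB]
    have e2 : (B *ᵥ z) ⬝ᵥ (C⁻¹ *ᵥ (B *ᵥ z)) = z ⬝ᵥ z := by
      rw [← quad_conj hBsymm]
      have : B * C⁻¹ * B = 1 := by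
        rw [← hBB, Matrix.mul_inv_rev]
        simp only [← Matrix.mul_assoc]
        rw [Matrix.mul_nonsing_inv _ hdetB, Matrix.one_mul, Matrix.nonsing_inv_mul _ hdetB]
      rw [this, Matrix.one_mulVec]
    rw [e1, e2] at h; exact h
  have hTinv : T⁻¹ = A⁻¹ * C * A⁻¹ := by
    rw [hC, ← Matrix.mul_assoc, ← Matrix.mul_assoc, Matrix.nonsing_inv_mul _ hdetA,
      Matrix.one_mul, Matrix.mul_assoc, Matrix.mul_nonsing_inv _ hdetA, Matrix.mul_one]
  have e1 : x ⬝ᵥ (T⁻¹ *ᵥ x) = (A⁻¹ *ᵥ x) ⬝ᵥ (C *ᵥ (A⁻¹ *ᵥ x)) := by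
    rw [hTinv, quad_conj hAinv_symm]
  have e2 : (A⁻¹ *ᵥ x) ⬝ᵥ (A⁻¹ *ᵥ x) = x ⬝ᵥ (S⁻¹ *ᵥ x) := by
    rw [← dot_mulVec_symm hAinv_symm, Matrix.mulVec_mulVec, ← hSinv]
  rw [e1, ← e2]
  exact step2 _

private lemma trace_inv_mul_le {S T : Matrix (Fin m) (Fin m) ℝ} (hS : S.PosDef) (hT : T.PosDef)
    (hD : (T - S).PosSemidef) : (T⁻¹ * S).trace ≤ (m : ℝ) := by
  set A := hS.posSemidef.sqrt with hA
  have hAA : A * A = S := hS.posSemidef.sqrt_mul_self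
  have hAsymm : Aᵀ = A := symm_of_herm hS.posSemidef.posSemidef_sqrt.1
  have hdetS : IsUnit S.det := isUnit_iff_ne_zero.2 (ne_of_gt hS.det_pos)
  have e1 : (T⁻¹ * S).trace = (A * T⁻¹ * A).trace := by
    rw [← hAA, ← Matrix.mul_assoc, Matrix.trace_mul_comm, ← Matrix.mul_assoc]
  have e2 : (A * S⁻¹ * A).trace = (m : ℝ) := by
    rw [Matrix.trace_mul_comm, ← Matrix.mul_assoc, hAA, Matrix.mul_nonsing_inv _ hdetS,
      Matrix.trace_one]
    simp
  calc (T⁻¹ * S).trace = ∑ i, (A i) ⬝ᵥ (T⁻¹ *ᵥ (A i)) := by rw [e1, trace_conj hAsymm]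
    _ ≤ ∑ i, (A i) ⬝ᵥ (S⁻¹ *ᵥ (A i)) :=
        Finset.sum_le_sum fun i _ => inv_quad_anti hS hT hD (A i)
    _ = (m : ℝ) := by rw [← trace_conj hAsymm, e2]

private lemma trace_inv_mul_psd_le {S : Matrix (Fin m) (Fin m) ℝ} (hS : S.PosDef)
    {D : Matrix (Fin m) (Fin m) ℝ} (hD : D.PosSemidef) :
    (S⁻¹ * D).trace ≤ op2 S⁻¹ * D.trace := by
  set B := hD.sqrt with hB
  have hBB : B * B = D := hD.sqrt_mul_self
  have hBsymm : Bᵀ = B := symm_of_herm hD.posSemidef_sqrt.1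
  have e1 : (S⁻¹ * D).trace = (B * S⁻¹ * B).trace := by
    rw [← hBB, ← Matrix.mul_assoc, Matrix.trace_mul_comm, ← Matrix.mul_assoc]
  have e2 : D.trace = ∑ i, (B i) ⬝ᵥ (B i) := by
    have h1 : (B * 1 * B).trace = ∑ i, (B i) ⬝ᵥ ((1 : Matrix (Fin m) (Fin m) ℝ) *ᵥ (B i)) :=
      trace_conj hBsymm
    simpa [Matrix.one_mulVec, hBB] using h1
  calc (S⁻¹ * D).trace = ∑ i, (B i) ⬝ᵥ (S⁻¹ *ᵥ (B i)) := by rw [e1, trace_conj hBsymm]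
    _ ≤ ∑ i, op2 S⁻¹ * enorm2 (B i) ^ 2 := Finset.sum_le_sum fun i _ => quad_le_op2 _ _
    _ = op2 S⁻¹ * D.trace := by
        rw [e2, Finset.mul_sum]
        exact Finset.sum_congr rfl fun i _ => by rw [enorm2_sq]

private lemma logdet_le {S T : Matrix (Fin m) (Fin m) ℝ} (hS : S.PosDef) (hT : T.PosDef)
    (hD : (T - S).PosSemidef) :
    Real.log (T.det / S.det) ≤ (S⁻¹ * (T - S)).trace := by
  set A := hS.posSemidef.sqrt with hA
  have hAA : A * A = S := hS.posSemidef.sqrt_mul_self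
  have hAsymm : Aᵀ = A := symm_of_herm hS.posSemidef.posSemidef_sqrt.1
  have hdetS : IsUnit S.det := isUnit_iff_ne_zero.2 (ne_of_gt hS.det_pos)
  have hdetA : IsUnit A.det := by
    have h1 : A.det * A.det = S.det := by rw [← Matrix.det_mul, hAA]
    have := hS.det_pos
    refine isUnit_iff_ne_zero.2 fun h => ?_
    rw [h, mul_zero] at h1; linarith
  have hAinv_symm : (A⁻¹)ᵀ = A⁻¹ := by rw [Matrix.transpose_nonsing_inv, hAsymm]
  have hSinv : S⁻¹ = A⁻¹ * A⁻¹ := by rw [← hAA, Matrix.mul_inv_rev]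
  set M := A⁻¹ * T * A⁻¹ with hM
  have hMsymm : Mᵀ = M := by
    rw [hM, Matrix.transpose_mul, Matrix.transpose_mul, hAinv_symm, symm_of_herm hT.1,
      Matrix.mul_assoc]
  have hMherm : M.IsHermitian := by
    rwa [Matrix.IsHermitian, Matrix.conjTranspose_eq_transpose_of_trivial]
  have key : ∀ z : Fin m → ℝ, z ⬝ᵥ z ≤ z ⬝ᵥ (M *ᵥ z) := by
    intro z
    set y := A⁻¹ *ᵥ z with hy
    have hz : A *ᵥ y = z := by
      rw [hy, Matrix.mulVec_mulVec, Matrix.mul_nonsing_inv _ hdetA, Matrix.one_mulVec]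
    have e1 : z ⬝ᵥ (M *ᵥ z) = y ⬝ᵥ (T *ᵥ y) := by rw [hM, quad_conj hAinv_symm]
    have e2 : z ⬝ᵥ z = y ⬝ᵥ (S *ᵥ y) := by
      rw [← hAA, ← Matrix.mulVec_mulVec, dot_mulVec_symm hAsymm, hz]
    have h3 := dot_nonneg_of_psd hD y
    rw [Matrix.sub_mulVec, dotProduct_sub] at h3
    rw [e1, e2]; linarith
  have hev : ∀ i, 1 ≤ hMherm.eigenvalues i := by
    intro i
    have hnorm : ‖hMherm.eigenvectorBasis i‖ = 1 := hMherm.eigenvectorBasis.orthonormal.1 i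
    have hvv : (⇑(hMherm.eigenvectorBasis i) : Fin m → ℝ) ⬝ᵥ ⇑(hMherm.eigenvectorBasis i) = 1 := by
      have := hnorm
      rw [EuclideanSpace.norm_eq, Real.sqrt_eq_one] at this
      simpa [dotProduct, Real.norm_eq_abs, sq_abs, pow_two] using this
    have heig := hMherm.eigenvalues_eq i
    have h2 := key (⇑(hMherm.eigenvectorBasis i))
    rw [hvv] at h2
    simpa [heig] using h2
  have hevpos : ∀ i, 0 < hMherm.eigenvalues i := fun i => lt_of_lt_of_le one_pos (hev i)
  have htr : M.trace = ∑ i, hMherm.eigenvalues i := by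
    nth_rewrite 1 [hMherm.spectral_theorem]
    rw [Unitary.conjStarAlgAut_apply, Matrix.trace_mul_comm, ← Matrix.mul_assoc, Unitary.coe_star_mul_self, Matrix.one_mul]
    simp [Matrix.trace_diagonal, Function.comp]
  have hdet : M.det = ∏ i, hMherm.eigenvalues i := by
    have := hMherm.det_eq_prod_eigenvalues
    simpa using this
  have hratio : T.det / S.det = M.det := by
    have h1 : M.det = A⁻¹.det * T.det * A⁻¹.det := by rw [hM, Matrix.det_mul, Matrix.det_mul]
    have h2 : A⁻¹.det = (A.det)⁻¹ := by rw [Matrix.det_nonsing_inv, Ring.inverse_eq_inv']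
    have h3 : A.det * A.det = S.det := by rw [← Matrix.det_mul, hAA]
    have h4 : A.det ≠ 0 := isUnit_iff_ne_zero.1 hdetA
    rw [h1, h2, ← h3]
    field_simp
  have htrM : M.trace = (S⁻¹ * T).trace := by
    rw [hM, Matrix.trace_mul_comm, ← Matrix.mul_assoc, ← hSinv]
  have hrhs : (S⁻¹ * (T - S)).trace = (S⁻¹ * T).trace - (m : ℝ) := by
    rw [Matrix.mul_sub, Matrix.trace_sub, Matrix.nonsing_inv_mul _ hdetS, Matrix.trace_one]
    simp
  calc Real.log (T.det / S.det) = Real.log (∏ i, hMherm.eigenvalues i) := by rw [hratio, hdet]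
    _ = ∑ i, Real.log (hMherm.eigenvalues i) :=
        Real.log_prod fun i _ => ne_of_gt (hevpos i)
    _ ≤ ∑ i, (hMherm.eigenvalues i - 1) :=
        Finset.sum_le_sum fun i _ => Real.log_le_sub_one_of_pos (hevpos i)
    _ = M.trace - (m : ℝ) := by
        rw [Finset.sum_sub_distrib, htr]
        simp
    _ = (S⁻¹ * (T - S)).trace := by rw [htrM, hrhs]


end Helpers

/-- KL divergence bound between N(μ,S) and N(ν,T) when T ⪰ S. -/
theorem stmt10 {m : ℕ} (S T : Matrix (Fin m) (Fin m) ℝ)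
    (hS : S.PosDef) (hT : T.PosDef) (hD : (T - S).PosSemidef)
    (μ ν : Fin m → ℝ) :
    (1 / 2) * ((T⁻¹ * S).trace - (m : ℝ)
        + (ν - μ) ⬝ᵥ (T⁻¹ *ᵥ (ν - μ))
        + Real.log (T.det / S.det))
      ≤ (1 / 2) * (op2 S⁻¹ * enorm2 (ν - μ) ^ 2 + op2 S⁻¹ * (T - S).trace) := by
  have h1 : (T⁻¹ * S).trace ≤ (m : ℝ) := trace_inv_mul_le hS hT hD
  have h2 : (ν - μ) ⬝ᵥ (T⁻¹ *ᵥ (ν - μ)) ≤ op2 S⁻¹ * enorm2 (ν - μ) ^ 2 :=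
    le_trans (inv_quad_anti hS hT hD (ν - μ)) (quad_le_op2 _ _)
  have h3 : Real.log (T.det / S.det) ≤ op2 S⁻¹ * (T - S).trace :=
    le_trans (logdet_le hS hT hD) (trace_inv_mul_psd_le hS hD)
  linarith
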